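/- arXiv:1403.1494 — 4 statements merged into one kernel-verified Lean document; each statement's English description precedes it below -/
import Mathlib

section
/- For the path graph P_n on n ≥ 2 vertices, the performance measure ρ_ss(P_n) = (1/2)∑_{i=2}^n λ_i^{-1} equals (n^2-1)/12. -/
open Matrix SimpleGraph Finset

/-- Performance measure: half the sum of reciprocals of the Laplacian eigenvalues
(the zero eigenvalue contributes `0⁻¹ = 0`). -/
noncomputable def rho {n : ℕ} (G : SimpleGraph (Fin n)) [DecidableRel G.Adj] : ℝ :=
  (1/2) * ∑ i, ((G.posSemidef_lapMatrix ℝ).1.eigenvalues i)⁻¹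

noncomputable instance {n : ℕ} : DecidableRel (pathGraph n).Adj := Classical.decRel _

namespace PathAux

variable (n : ℕ)

def J : Matrix (Fin n) (Fin n) ℝ := Matrix.of fun _ _ => 1
noncomputable def Pm : Matrix (Fin n) (Fin n) ℝ := 1 - (n : ℝ)⁻¹ • J n
noncomputable def Xm : Matrix (Fin n) (Fin n) ℝ :=
  Matrix.of fun i j => -|(i.val : ℝ) - (j.val : ℝ)| / 2
noncomputable def Bm : Matrix (Fin n) (Fin n) ℝ :=
  Matrix.of fun i _ => if i.val = 0 ∨ i.val = n - 1 then (1/2 : ℝ) else 0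

variable {n}

lemma col_sum_Pm (hn : 0 < n) (j : Fin n) : ∑ k, Pm n k j = 0 := by
  have h0 : (n : ℝ) ≠ 0 := Nat.cast_ne_zero.mpr hn.ne'
  simp only [Pm, Matrix.sub_apply, Matrix.smul_apply, J, Matrix.of_apply, smul_eq_mul, mul_one,
    Finset.sum_sub_distrib, Finset.sum_const, Finset.card_univ, Fintype.card_fin, nsmul_eq_mul,
    Matrix.one_apply]
  rw [Finset.sum_ite_eq' univ j (fun _ => (1:ℝ))]
  simp [h0]

lemma Bm_mul_Pm (hn : 0 < n) : Bm n * Pm n = 0 := by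
  ext i j
  simp only [Matrix.mul_apply, Bm, Matrix.of_apply, Matrix.zero_apply]
  rw [← Finset.mul_sum, col_sum_Pm hn, mul_zero]

lemma Pm_mul_Pm (hn : 0 < n) : Pm n * Pm n = Pm n := by
  have h0 : (n : ℝ) ≠ 0 := Nat.cast_ne_zero.mpr hn.ne'
  have hJJ : J n * J n = (n : ℝ) • J n := by
    ext i j
    simp [J, Matrix.mul_apply, Matrix.smul_apply]
  simp only [Pm, sub_mul, mul_sub, one_mul, mul_one, Matrix.smul_mul, Matrix.mul_smul, hJJ,
    smul_smul, inv_mul_cancel₀ h0]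
  abel


lemma adj_sum_eval (i : Fin n) (f : Fin n → ℝ) :
    ∑ k, (if (pathGraph n).Adj i k then f k else 0)
      = (if h : i.val + 1 < n then f ⟨i.val + 1, h⟩ else 0)
      + (if h : 0 < i.val then f ⟨i.val - 1, by omega⟩ else 0) := by
  have split : ∀ k : Fin n, (if (pathGraph n).Adj i k then f k else 0)
      = (if i.val + 1 = k.val then f k else 0) + (if k.val + 1 = i.val then f k else 0) := by
    intro k
    simp only [pathGraph_adj]
    by_cases h1 : i.val + 1 = k.val <;> by_cases h2 : k.val + 1 = i.val <;>
      first | omega | simp [h1, h2]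
  rw [Finset.sum_congr rfl (fun k _ => split k), Finset.sum_add_distrib]
  congr 1
  · split_ifs with h
    · rw [Finset.sum_eq_single (⟨i.val + 1, h⟩ : Fin n)]
      · simp
      · intro b _ hb
        rw [if_neg]
        intro hc
        exact hb (Fin.ext hc.symm)
      · intro hb; exact absurd (Finset.mem_univ _) hb
    · apply Finset.sum_eq_zero
      intro k _
      rw [if_neg]
      have := k.isLt
      omega
  · split_ifs with h
    · rw [Finset.sum_eq_single (⟨i.val - 1, by omega⟩ : Fin n)]
      · rw [if_pos (by simp; omega)]
      · intro b _ hb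
        rw [if_neg]
        intro hc
        exact hb (Fin.ext (by simp; omega))
      · intro hb; exact absurd (Finset.mem_univ _) hb
    · apply Finset.sum_eq_zero
      intro k _
      rw [if_neg]
      omega

lemma L_mul_X (hn : 2 ≤ n) :
    (pathGraph n).lapMatrix ℝ * Xm n = 1 - Bm n := by
  ext i j
  rw [Matrix.mul_apply, Matrix.sub_apply]
  have hrow : ∑ k, (pathGraph n).lapMatrix ℝ i k = 0 := by
    have h := congrFun ((pathGraph n).lapMatrix_mulVec_const_eq_zero (R := ℝ)) i
    simpa [Matrix.mulVec, dotProduct] using h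
  have expand : ∀ k : Fin n, (pathGraph n).lapMatrix ℝ i k * Xm n k j
      = (pathGraph n).lapMatrix ℝ i k * Xm n i j
        + (if (pathGraph n).Adj i k then Xm n i j - Xm n k j else 0) := by
    intro k
    by_cases hk : k = i
    · subst hk
      simp [SimpleGraph.irrefl]
    · have hL : (pathGraph n).lapMatrix ℝ i k
          = -(if (pathGraph n).Adj i k then (1:ℝ) else 0) := by
        simp [SimpleGraph.lapMatrix, SimpleGraph.degMatrix,
          Matrix.diagonal_apply_ne _ (fun hc => hk (id hc.symm) : i ≠ k)]
      rw [hL]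
      split_ifs <;> ring
  rw [Finset.sum_congr rfl (fun k _ => expand k), Finset.sum_add_distrib, ← Finset.sum_mul,
    hrow, zero_mul, zero_add, adj_sum_eval]
  simp only [Xm, Bm, Matrix.of_apply, Matrix.one_apply, Fin.val_mk]
  by_cases hi0 : i.val = 0
  · rw [dif_pos (by omega), dif_neg (by omega), add_zero]
    push_cast
    by_cases hij : i = j
    · subst hij
      rw [if_pos rfl, if_pos (Or.inl hi0), sub_self, abs_zero,
        show (i.val:ℝ) + 1 - i.val = 1 by ring, abs_one]
      norm_num
    · have hne : i.val ≠ j.val := fun hc => hij (Fin.ext hc)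
      have hb : (i.val:ℝ) + 1 ≤ (j.val:ℝ) := by exact_mod_cast (by omega : i.val + 1 ≤ j.val)
      rw [if_neg hij, if_pos (Or.inl hi0),
        abs_of_nonpos (show (i.val:ℝ) - (j.val:ℝ) ≤ 0 by linarith),
        abs_of_nonpos (show (i.val:ℝ) + 1 - (j.val:ℝ) ≤ 0 by linarith)]
      ring
  · by_cases hil : i.val = n - 1
    · rw [dif_neg (by omega), dif_pos (by omega), zero_add,
        Nat.cast_sub (by omega : 1 ≤ i.val), Nat.cast_one]
      by_cases hij : i = j
      · subst hij
        rw [if_pos rfl, if_pos (Or.inr hil), sub_self, abs_zero,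
          show (i.val:ℝ) - 1 - i.val = -1 by ring, abs_neg, abs_one]
        norm_num
      · have hne : i.val ≠ j.val := fun hc => hij (Fin.ext hc)
        have hb : (j.val:ℝ) + 1 ≤ (i.val:ℝ) := by
          exact_mod_cast (by have := j.isLt; omega : j.val + 1 ≤ i.val)
        rw [if_neg hij, if_pos (Or.inr hil),
          abs_of_nonneg (show (0:ℝ) ≤ (i.val:ℝ) - (j.val:ℝ) by linarith),
          abs_of_nonneg (show (0:ℝ) ≤ (i.val:ℝ) - 1 - (j.val:ℝ) by linarith)]
        ring
    · rw [dif_pos (by have := i.isLt; omega), dif_pos (by omega),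
        Nat.cast_sub (by omega : 1 ≤ i.val), Nat.cast_one]
      push_cast
      by_cases hij : i = j
      · subst hij
        rw [if_pos rfl, if_neg (by omega : ¬(i.val = 0 ∨ i.val = n - 1)), sub_self, abs_zero,
          show (i.val:ℝ) + 1 - i.val = 1 by ring, abs_one,
          show (i.val:ℝ) - 1 - i.val = -1 by ring, abs_neg, abs_one]
        norm_num
      · have hne : i.val ≠ j.val := fun hc => hij (Fin.ext hc)
        rw [if_neg hij, if_neg (by omega : ¬(i.val = 0 ∨ i.val = n - 1))]
        rcases lt_or_gt_of_ne hne with h | h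
        · have hb : (i.val:ℝ) + 1 ≤ (j.val:ℝ) := by exact_mod_cast (by omega : i.val + 1 ≤ j.val)
          rw [abs_of_nonpos (show (i.val:ℝ) - (j.val:ℝ) ≤ 0 by linarith),
            abs_of_nonpos (show (i.val:ℝ) + 1 - (j.val:ℝ) ≤ 0 by linarith),
            abs_of_nonpos (show (i.val:ℝ) - 1 - (j.val:ℝ) ≤ 0 by linarith)]
          ring
        · have hb : (j.val:ℝ) + 1 ≤ (i.val:ℝ) := by exact_mod_cast (by omega : j.val + 1 ≤ i.val)
          rw [abs_of_nonneg (show (0:ℝ) ≤ (i.val:ℝ) - (j.val:ℝ) by linarith),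
            abs_of_nonneg (show (0:ℝ) ≤ (i.val:ℝ) + 1 - (j.val:ℝ) by linarith),
            abs_of_nonneg (show (0:ℝ) ≤ (i.val:ℝ) - 1 - (j.val:ℝ) by linarith)]
          ring


lemma sum_range_cast (m : ℕ) : ∑ i ∈ Finset.range m, (i : ℝ) = m * ((m : ℝ) - 1) / 2 := by
  induction m with
  | zero => simp
  | succ k ih =>
    rw [Finset.sum_range_succ, ih]
    push_cast
    ring

lemma sum_abs_range (m : ℕ) :
    ∑ i ∈ Finset.range m, ∑ j ∈ Finset.range m, |(i : ℝ) - (j : ℝ)|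
      = m * ((m : ℝ) ^ 2 - 1) / 3 := by
  induction m with
  | zero => simp
  | succ k ih =>
    have h1 : ∑ i ∈ Finset.range k, |(i : ℝ) - (k : ℝ)| = k * ((k : ℝ) + 1) / 2 := by
      rw [Finset.sum_congr rfl (fun i hi => abs_of_nonpos (by
        have := Finset.mem_range.mp hi
        have : (i : ℝ) ≤ (k : ℝ) := by exact_mod_cast this.le
        linarith))]
      simp only [neg_sub, Finset.sum_sub_distrib, Finset.sum_const, Finset.card_range,
        nsmul_eq_mul, sum_range_cast]
      ring
    have h2 : ∑ j ∈ Finset.range k, |(k : ℝ) - (j : ℝ)| = k * ((k : ℝ) + 1) / 2 := by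
      refine (Finset.sum_congr rfl fun (j:ℕ) _ => abs_sub_comm (k:ℝ) (j:ℝ)).trans ?_
      exact h1
    have step : ∑ i ∈ Finset.range (k+1), ∑ j ∈ Finset.range (k+1), |(i : ℝ) - (j : ℝ)|
        = (∑ i ∈ Finset.range k, ((∑ j ∈ Finset.range k, |(i:ℝ) - (j:ℝ)|) + |(i:ℝ) - (k:ℝ)|))
          + ((∑ j ∈ Finset.range k, |(k:ℝ) - (j:ℝ)|) + |(k:ℝ) - (k:ℝ)|) := by
      rw [Finset.sum_range_succ]
      congr 1
      · exact Finset.sum_congr rfl fun i _ => Finset.sum_range_succ _ _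
      · exact Finset.sum_range_succ _ _
    rw [step, Finset.sum_add_distrib, ih, h1, h2, sub_self, abs_zero]
    push_cast
    ring

lemma sum_abs_fin (n : ℕ) :
    ∑ i : Fin n, ∑ j : Fin n, |(i.val : ℝ) - (j.val : ℝ)| = n * ((n : ℝ) ^ 2 - 1) / 3 := by
  have e1 : ∀ a : ℕ, (∑ j : Fin n, |(a : ℝ) - (j.val : ℝ)|) = ∑ j ∈ Finset.range n, |(a:ℝ) - (j:ℝ)| :=
    fun a => Fin.sum_univ_eq_sum_range (fun (b:ℕ) => |(a:ℝ) - (b:ℝ)|) n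
  calc ∑ i : Fin n, ∑ j : Fin n, |(i.val:ℝ) - (j.val:ℝ)|
      = ∑ i : Fin n, ∑ j ∈ Finset.range n, |(i.val:ℝ) - (j:ℝ)| :=
        Finset.sum_congr rfl fun i _ => e1 i.val
    _ = ∑ i ∈ Finset.range n, ∑ j ∈ Finset.range n, |(i:ℝ) - (j:ℝ)| :=
        Fin.sum_univ_eq_sum_range (fun (a:ℕ) => ∑ j ∈ Finset.range n, |(a:ℝ) - (j:ℝ)|) n
    _ = _ := sum_abs_range n

lemma trace_Gm (hn : 2 ≤ n) : (Pm n * Xm n * Pm n).trace = ((n : ℝ) ^ 2 - 1) / 6 := by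
  have h0 : (n : ℝ) ≠ 0 := Nat.cast_ne_zero.mpr (by omega)
  rw [Matrix.trace_mul_cycle, Pm_mul_Pm (by omega)]
  have expand : Pm n * Xm n = Xm n - (n : ℝ)⁻¹ • (J n * Xm n) := by
    rw [Pm, Matrix.sub_mul, Matrix.one_mul, Matrix.smul_mul]
  rw [expand, Matrix.trace_sub, Matrix.trace_smul]
  have h1 : (Xm n).trace = 0 := by simp [Matrix.trace, Matrix.diag, Xm]
  have h2 : (J n * Xm n).trace = ∑ i : Fin n, ∑ j : Fin n, -|(i.val : ℝ) - (j.val : ℝ)| / 2 := by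
    simp only [Matrix.trace, Matrix.diag, Matrix.mul_apply, J, Xm, Matrix.of_apply, one_mul]
    rw [Finset.sum_comm]
  have h3 : ∑ i : Fin n, ∑ j : Fin n, -|(i.val : ℝ) - (j.val : ℝ)| / 2
      = -(n * ((n : ℝ) ^ 2 - 1) / 3) / 2 := by
    simp only [neg_div, Finset.sum_neg_distrib, ← Finset.sum_div, sum_abs_fin]
  rw [h1, h2, h3, smul_eq_mul]
  field_simp
  ring


lemma key (n : ℕ) (hn : 2 ≤ n) :
    ∑ i, (((pathGraph n).posSemidef_lapMatrix ℝ).1.eigenvalues i)⁻¹ = ((n : ℝ) ^ 2 - 1) / 6 := by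
  have h0 : (n : ℝ) ≠ 0 := Nat.cast_ne_zero.mpr (by omega)
  set L := (pathGraph n).lapMatrix ℝ with hLdef
  have hL : L.IsHermitian := ((pathGraph n).posSemidef_lapMatrix ℝ).1
  show ∑ i, (hL.eigenvalues i)⁻¹ = ((n : ℝ) ^ 2 - 1) / 6
  set d := hL.eigenvalues with hd
  set U : Matrix (Fin n) (Fin n) ℝ := (hL.eigenvectorUnitary : Matrix (Fin n) (Fin n) ℝ)
    with hUdef
  have hUU : star U * U = 1 := Matrix.mem_unitaryGroup_iff'.mp hL.eigenvectorUnitary.2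
  have hUU' : U * star U = 1 := Matrix.mem_unitaryGroup_iff.mp hL.eigenvectorUnitary.2
  have hspec : L = U * Matrix.diagonal d * star U := by
    have h := hL.spectral_theorem
    rw [RCLike.ofReal_real_eq_id, Function.id_comp] at h
    exact h
  have conjmul : ∀ A B : Matrix (Fin n) (Fin n) ℝ,
      (U * A * star U) * (U * B * star U) = U * (A * B) * star U := by
    intro A B
    calc (U * A * star U) * (U * B * star U)
        = U * (A * ((star U * U) * (B * star U))) := by simp only [Matrix.mul_assoc]
      _ = U * (A * (B * star U)) := by rw [hUU, Matrix.one_mul]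
      _ = U * (A * B) * star U := by simp only [Matrix.mul_assoc]
  set ind : Fin n → ℝ := fun i => if d i = 0 then 1 else 0 with hind
  set Dinv := Matrix.diagonal (fun i => (d i)⁻¹) with hDinv
  set D0 := Matrix.diagonal ind with hD0
  set G' := U * Dinv * star U with hG'
  set P0 := U * D0 * star U with hP0
  have hdd : Matrix.diagonal d * Dinv = 1 - D0 := by
    rw [hDinv, hD0, Matrix.diagonal_mul_diagonal]
    ext i j
    rcases eq_or_ne i j with rfl | hij
    · by_cases h : d i = 0
      · simp [Matrix.diagonal_apply, hind, h, Matrix.one_apply, Matrix.sub_apply]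
      · simp [Matrix.diagonal_apply, hind, h, Matrix.one_apply, Matrix.sub_apply,
          mul_inv_cancel₀ h]
    · simp [Matrix.diagonal_apply, hij, Matrix.one_apply, Matrix.sub_apply]
  have hdd' : Dinv * Matrix.diagonal d = 1 - D0 := by
    rw [hDinv, hD0, Matrix.diagonal_mul_diagonal]
    ext i j
    rcases eq_or_ne i j with rfl | hij
    · by_cases h : d i = 0
      · simp [Matrix.diagonal_apply, hind, h, Matrix.one_apply, Matrix.sub_apply]
      · simp [Matrix.diagonal_apply, hind, h, Matrix.one_apply, Matrix.sub_apply,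
          inv_mul_cancel₀ h]
    · simp [Matrix.diagonal_apply, hij, Matrix.one_apply, Matrix.sub_apply]
  have hdD0 : Matrix.diagonal d * D0 = 0 := by
    rw [hD0, Matrix.diagonal_mul_diagonal]
    ext i j
    rcases eq_or_ne i j with rfl | hij
    · by_cases h : d i = 0 <;> simp [Matrix.diagonal_apply, hind, h]
    · simp [Matrix.diagonal_apply, hij]
  have hD00 : D0 * D0 = D0 := by
    rw [hD0, Matrix.diagonal_mul_diagonal]
    ext i j
    rcases eq_or_ne i j with rfl | hij
    · by_cases h : d i = 0 <;> simp [Matrix.diagonal_apply, hind, h]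
    · simp [Matrix.diagonal_apply, hij]
  have hDinvD0 : Dinv * D0 = 0 := by
    rw [hDinv, hD0, Matrix.diagonal_mul_diagonal]
    ext i j
    rcases eq_or_ne i j with rfl | hij
    · by_cases h : d i = 0 <;> simp [Matrix.diagonal_apply, hind, h]
    · simp [Matrix.diagonal_apply, hij]
  have hLG' : L * G' = 1 - P0 := by
    rw [hspec, hG', conjmul, hdd, Matrix.mul_sub, Matrix.mul_one, Matrix.sub_mul, hUU', ← hP0]
  have hG'L : G' * L = 1 - P0 := by
    rw [hspec, hG', conjmul, hdd', Matrix.mul_sub, Matrix.mul_one, Matrix.sub_mul, hUU', ← hP0]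
  have hG'P0 : G' * P0 = 0 := by
    rw [hG', hP0, conjmul, hDinvD0, Matrix.mul_zero, Matrix.zero_mul]
  have hLP0 : L * P0 = 0 := by
    rw [hspec, hP0, conjmul, hdD0, Matrix.mul_zero, Matrix.zero_mul]
  have hP0P0 : P0 * P0 = P0 := by
    rw [hP0, conjmul, hD00]
  have hP0H : P0ᴴ = P0 := by
    rw [hP0, hD0]
    simp [Matrix.conjTranspose_mul, Matrix.mul_assoc, Matrix.diagonal_conjTranspose,
      Matrix.star_eq_conjTranspose, Matrix.diagonal_transpose]
  have hsym : ∀ i j, P0 i j = P0 j i := by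
    intro i j
    have h := congrFun (congrFun hP0H j) i
    simpa [Matrix.conjTranspose_apply] using h
  have hrow : ∀ i, ∑ k, L i k = 0 := by
    intro i
    have h := congrFun ((pathGraph n).lapMatrix_mulVec_const_eq_zero (R := ℝ)) i
    simpa [Matrix.mulVec, dotProduct, ← hLdef] using h
  have hker : ∀ v : Fin n → ℝ, L *ᵥ v = 0 → ∀ i i' : Fin n, v i = v i' := by
    intro v hv i i'
    refine ((pathGraph n).lapMatrix_mulVec_eq_zero_iff_forall_reachable (x := v)).mp ?_ i i'
      (pathGraph_preconnected n i i')
    exact hv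
  have hcols : ∀ j : Fin n, L *ᵥ (fun k => P0 k j) = 0 := by
    intro j
    funext i
    have h := congrFun (congrFun hLP0 i) j
    simpa [Matrix.mul_apply, Matrix.mulVec, dotProduct] using h
  set i0 : Fin n := ⟨0, by omega⟩ with hi0
  have hconst : ∀ i j, P0 i j = P0 i0 i0 := by
    intro i j
    rw [hker _ (hcols j) i i0, hsym i0 j, hker _ (hcols i0) j i0]
  have hdet : L.det = 0 := by
    rw [hLdef, ← Matrix.exists_mulVec_eq_zero_iff]
    exact ⟨fun _ => 1, fun h => one_ne_zero (congrFun h i0),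
      (pathGraph n).lapMatrix_mulVec_const_eq_zero⟩
  have hzero : ∃ i, d i = 0 := by
    have hp := hL.det_eq_prod_eigenvalues
    rw [hdet] at hp
    obtain ⟨i, _, hi⟩ := Finset.prod_eq_zero_iff.mp hp.symm
    exact ⟨i, by exact_mod_cast hi⟩
  have htrP0 : P0.trace = ∑ i, ind i := by
    rw [hP0, Matrix.trace_mul_cycle, hUU, Matrix.one_mul, hD0, Matrix.trace_diagonal]
  have htrP0' : P0.trace = n * P0 i0 i0 := by
    simp only [Matrix.trace, Matrix.diag]
    rw [Finset.sum_congr rfl (fun i _ => hconst i i), Finset.sum_const, Finset.card_univ,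
      Fintype.card_fin, nsmul_eq_mul]
  have hcne : P0 i0 i0 ≠ 0 := by
    intro hc
    obtain ⟨i, hi⟩ := hzero
    have h1 : (1:ℝ) ≤ ∑ j, ind j := by
      have h2 := Finset.single_le_sum (f := ind)
        (fun j _ => by by_cases h : d j = 0 <;> simp [hind, h]) (Finset.mem_univ i)
      simpa [hind, hi] using h2
    rw [← htrP0, htrP0', hc, mul_zero] at h1
    linarith
  have hc : P0 i0 i0 = (n:ℝ)⁻¹ := by
    have h := congrFun (congrFun hP0P0 i0) i0
    rw [Matrix.mul_apply] at h
    rw [Finset.sum_congr rfl (fun k _ => by rw [hconst i0 k, hconst k i0])] at h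
    rw [Finset.sum_const, Finset.card_univ, Fintype.card_fin, nsmul_eq_mul] at h
    have h3 : ((n:ℝ) * P0 i0 i0) * (P0 i0 i0) = 1 * (P0 i0 i0) := by
      rw [one_mul]; linear_combination h
    have h4 : (n:ℝ) * P0 i0 i0 = 1 := mul_right_cancel₀ hcne h3
    exact eq_inv_of_mul_eq_one_left (by linear_combination h4)
  have hP0J : P0 = (n:ℝ)⁻¹ • J n := by
    ext i j
    rw [hconst i j, hc]
    simp [J, Matrix.smul_apply]
  have hPmP0 : Pm n = 1 - P0 := by rw [Pm, hP0J]
  have hLJ : L * J n = 0 := by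
    ext i j
    simp only [Matrix.mul_apply, J, Matrix.of_apply, mul_one, Matrix.zero_apply]
    exact hrow i
  have hLPm : L * Pm n = L := by
    rw [Pm, Matrix.mul_sub, Matrix.mul_one, Matrix.mul_smul, hLJ, smul_zero, sub_zero]
  have hLGm : L * (Pm n * Xm n * Pm n) = Pm n := by
    rw [← Matrix.mul_assoc L (Pm n * Xm n) (Pm n), ← Matrix.mul_assoc L (Pm n) (Xm n), hLPm,
      hLdef, L_mul_X hn, Matrix.sub_mul, Matrix.one_mul, Bm_mul_Pm (by omega), sub_zero]
  have hG'Pm : G' * Pm n = G' := by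
    rw [hPmP0, Matrix.mul_sub, Matrix.mul_one, hG'P0, sub_zero]
  have hPmGm : Pm n * (Pm n * Xm n * Pm n) = Pm n * Xm n * Pm n := by
    rw [← Matrix.mul_assoc (Pm n) (Pm n * Xm n) (Pm n),
      ← Matrix.mul_assoc (Pm n) (Pm n) (Xm n), Pm_mul_Pm (by omega)]
  have hG'L2 : G' * L = Pm n := by rw [hG'L, hPmP0]
  have hGG : G' = Pm n * Xm n * Pm n := by
    calc G' = G' * Pm n := hG'Pm.symm
      _ = G' * (L * (Pm n * Xm n * Pm n)) := by rw [hLGm]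
      _ = (G' * L) * (Pm n * Xm n * Pm n) := (Matrix.mul_assoc G' L (Pm n * Xm n * Pm n)).symm
      _ = Pm n * (Pm n * Xm n * Pm n) := by rw [hG'L2]
      _ = Pm n * Xm n * Pm n := hPmGm
  have htrG' : G'.trace = ∑ i, (d i)⁻¹ := by
    rw [hG', Matrix.trace_mul_cycle, hUU, Matrix.one_mul, hDinv, Matrix.trace_diagonal]
  rw [← htrG', hGG, trace_Gm hn]

end PathAux

/-- For the path graph `P_n` (`n ≥ 2`), `ρ_ss(P_n) = (n^2-1)/12`. -/
theorem stmt2 (n : ℕ) (hn : 2 ≤ n) :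
    rho (pathGraph n) = ((n : ℝ) ^ 2 - 1) / 12 := by
  unfold rho
  rw [PathAux.key n hn]
  ring
end

section
/- For every connected simple unweighted graph G on n vertices, the performance measure satisfies ρ_ss(G) ≥ (n-1)/(2n), with equality if and only if G is the complete graph K_n. -/
open Matrix SimpleGraph Finset

lemma trace_eq_sum_eigs' {n : ℕ} {A : Matrix (Fin n) (Fin n) ℝ} (hA : A.IsHermitian) :
    A.trace = ∑ i, hA.eigenvalues i := by
  conv_lhs => rw [hA.spectral_theorem, Unitary.conjStarAlgAut_apply]
  rw [Matrix.trace_mul_cycle,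
    (Matrix.mem_unitaryGroup_iff').mp (Matrix.IsHermitian.eigenvectorUnitary hA).2, Matrix.one_mul,
    Matrix.trace_diagonal]
  simp

lemma trace_lap' {n : ℕ} (G : SimpleGraph (Fin n)) [DecidableRel G.Adj] :
    (G.lapMatrix ℝ).trace = ∑ v, (G.degree v : ℝ) := by
  simp [SimpleGraph.lapMatrix, Matrix.trace, Matrix.diag, SimpleGraph.degMatrix]

lemma card_nonzero' {n : ℕ} (G : SimpleGraph (Fin n)) [DecidableRel G.Adj] (hG : G.Connected) :
    Fintype.card {i // (G.posSemidef_lapMatrix ℝ).1.eigenvalues i ≠ 0} = n - 1 := by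
  have hs : Subsingleton G.ConnectedComponent := by
    constructor
    intro a b
    refine ConnectedComponent.ind₂ (fun u v => ?_) a b
    exact ConnectedComponent.sound (hG.preconnected u v)
  have hne : Nonempty G.ConnectedComponent := hG.nonempty.map G.connectedComponentMk
  have h1 : Fintype.card G.ConnectedComponent = 1 :=
    le_antisymm (Fintype.card_le_one_iff_subsingleton.mpr hs) Fintype.card_pos
  have hker : Module.finrank ℝ (LinearMap.ker (Matrix.toLin' (G.lapMatrix ℝ))) = 1 := by
    rw [← G.card_connectedComponent_eq_finrank_ker_toLin'_lapMatrix, h1]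
  have htl : Matrix.toLin' (G.lapMatrix ℝ) = Matrix.mulVecLin (G.lapMatrix ℝ) := rfl
  have hrn := LinearMap.finrank_range_add_finrank_ker (Matrix.toLin' (G.lapMatrix ℝ))
  rw [hker, htl] at hrn
  have hrank : (G.lapMatrix ℝ).rank = n - 1 := by
    rw [Matrix.rank]
    have : Module.finrank ℝ (Fin n → ℝ) = n := by simp
    omega
  rw [← (G.posSemidef_lapMatrix ℝ).1.rank_eq_card_non_zero_eigs, hrank]

lemma eq_top_of_deg' {n : ℕ} (G : SimpleGraph (Fin n)) [DecidableRel G.Adj]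
    (h : ∀ v, G.degree v = n - 1) : G = ⊤ := by
  ext v w
  simp only [SimpleGraph.top_adj]
  constructor
  · exact fun hvw => hvw.ne
  · intro hvw
    have hsub : G.neighborFinset v ⊆ Finset.univ.erase v := by
      intro u hu
      rw [Finset.mem_erase]
      exact ⟨fun he => (G.mem_neighborFinset v u).mp hu |>.ne' he, Finset.mem_univ u⟩
    have hcard : (Finset.univ.erase v).card = n - 1 := by
      rw [Finset.card_erase_of_mem (Finset.mem_univ v)]
      simp
    have hEq : G.neighborFinset v = Finset.univ.erase v := by
      apply Finset.eq_of_subset_of_card_le hsub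
      rw [hcard, ← h v, SimpleGraph.card_neighborFinset_eq_degree]
    have hw : w ∈ G.neighborFinset v := by
      rw [hEq, Finset.mem_erase]
      exact ⟨Ne.symm hvw, Finset.mem_univ w⟩
    exact (G.mem_neighborFinset v w).mp hw

lemma lap_top_sq' {n : ℕ} [DecidableRel (⊤ : SimpleGraph (Fin n)).Adj] (hn : 1 ≤ n) :
    ((⊤ : SimpleGraph (Fin n)).lapMatrix ℝ) * ((⊤ : SimpleGraph (Fin n)).lapMatrix ℝ) =
      (n : ℝ) • ((⊤ : SimpleGraph (Fin n)).lapMatrix ℝ) := by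
  set J : Matrix (Fin n) (Fin n) ℝ := Matrix.of (fun _ _ => 1) with hJdef
  have hJ : J * J = (n : ℝ) • J := by
    ext i j
    simp [hJdef, Matrix.mul_apply, Matrix.smul_apply]
  have hdeg : ∀ v : Fin n, (⊤ : SimpleGraph (Fin n)).degree v = n - 1 := by
    intro v
    rw [SimpleGraph.degree]
    have : (⊤ : SimpleGraph (Fin n)).neighborFinset v = Finset.univ.erase v := by
      ext u
      simp [SimpleGraph.mem_neighborFinset, eq_comm]
    rw [this, Finset.card_erase_of_mem (Finset.mem_univ v)]
    simp
  have hL : (⊤ : SimpleGraph (Fin n)).lapMatrix ℝ = (n : ℝ) • 1 - J := by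
    ext i j
    by_cases h : i = j
    · subst h
      simp [SimpleGraph.lapMatrix, SimpleGraph.degMatrix, hdeg, hJdef, Nat.cast_sub hn]
    · simp [SimpleGraph.lapMatrix, SimpleGraph.degMatrix, SimpleGraph.adjMatrix, hJdef, h,
        Matrix.one_apply_ne h]
  rw [hL, sub_mul, mul_sub, mul_sub, smul_mul_assoc, smul_mul_assoc, one_mul, mul_smul_comm,
    mul_one, hJ, smul_sub, smul_smul]
  simp only [Matrix.one_mul]
  abel

lemma eig_of_sq' {n : ℕ} {A : Matrix (Fin n) (Fin n) ℝ} (hA : A.IsHermitian) (c : ℝ)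
    (h : A * A = c • A) (i : Fin n) : hA.eigenvalues i = 0 ∨ hA.eigenvalues i = c := by
  have hv := hA.mulVec_eigenvectorBasis i
  set μ := hA.eigenvalues i with hμ
  set v := ⇑(hA.eigenvectorBasis i) with hvdef
  have h2 : (A * A) *ᵥ v = (μ * μ) • v := by
    rw [← Matrix.mulVec_mulVec, hv, Matrix.mulVec_smul, hv, smul_smul]
  have h3 : (A * A) *ᵥ v = (c * μ) • v := by
    rw [h, Matrix.smul_mulVec, hv, smul_smul]
  have hvne : v ≠ 0 := by
    intro h0
    have hne := hA.eigenvectorBasis.toBasis.ne_zero i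
    apply hne
    rw [OrthonormalBasis.coe_toBasis]
    ext j
    exact congrFun h0 j
  have hcan : μ * μ = c * μ := by
    have heq := h2.symm.trans h3
    have h4 : (μ * μ - c * μ) • v = 0 := by
      rw [sub_smul, heq, sub_self]
    rcases smul_eq_zero.mp h4 with h5 | h5
    · linarith [sub_eq_zero.mp (by linarith [h5] : μ * μ - c * μ = 0)]
    · exact absurd h5 hvne
  rcases eq_or_ne μ 0 with h0 | h0
  · exact Or.inl h0
  · exact Or.inr (mul_right_cancel₀ h0 hcan)

/-- Every connected graph satisfies `ρ_ss(G) ≥ (n-1)/(2n)`,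
with equality iff `G` is the complete graph. -/
theorem stmt3 {n : ℕ} (G : SimpleGraph (Fin n)) [DecidableRel G.Adj] (hG : G.Connected) :
    ((n : ℝ) - 1) / (2 * n) ≤ rho G ∧
    (rho G = ((n : ℝ) - 1) / (2 * n) ↔ G = ⊤) := by
  have hnV : Nonempty (Fin n) := hG.nonempty
  have hn : 1 ≤ n := Fin.pos_iff_nonempty.mpr hnV
  have hn0 : (0 : ℝ) < n := by exact_mod_cast hn
  set μ : Fin n → ℝ := (G.posSemidef_lapMatrix ℝ).1.eigenvalues with hμdef
  have hμ0 : ∀ i, 0 ≤ μ i := fun i => (G.posSemidef_lapMatrix ℝ).eigenvalues_nonneg i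
  set S : Finset (Fin n) := Finset.univ.filter (fun i => μ i ≠ 0) with hSdef
  have hScard : S.card = n - 1 := by
    have := card_nonzero' G hG
    rwa [Fintype.card_subtype] at this
  have hcast : ((n - 1 : ℕ) : ℝ) = (n : ℝ) - 1 := by
    rw [Nat.cast_sub hn]; simp
  set I : ℝ := ∑ i, (μ i)⁻¹ with hIdef
  have hI0 : 0 ≤ I := Finset.sum_nonneg fun i _ => inv_nonneg.mpr (hμ0 i)
  have hIS : I = ∑ i ∈ S, (μ i)⁻¹ := by
    rw [hIdef, hSdef]
    symm
    apply Finset.sum_filter_of_ne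
    intro i _ h hc
    exact h (by rw [hc]; simp)
  have hrho : rho G = (1/2) * I := rfl
  -- sum of eigenvalues equals sum of degrees
  have hsum : ∑ i, μ i = ∑ v, (G.degree v : ℝ) := by
    rw [hμdef, ← trace_eq_sum_eigs' (G.posSemidef_lapMatrix ℝ).1, trace_lap']
  -- sum of degrees bounded by n(n-1)
  have hdegle : ∀ v, (G.degree v : ℝ) ≤ (n : ℝ) - 1 := by
    intro v
    have h1 := G.degree_lt_card_verts v
    rw [Fintype.card_fin] at h1
    have h2 : G.degree v ≤ n - 1 := Nat.le_pred_of_lt h1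
    calc (G.degree v : ℝ) ≤ ((n - 1 : ℕ) : ℝ) := by exact_mod_cast h2
      _ = (n : ℝ) - 1 := hcast
  have hTle : ∑ i ∈ S, μ i ≤ (n : ℝ) * ((n : ℝ) - 1) := by
    calc ∑ i ∈ S, μ i ≤ ∑ i, μ i :=
          Finset.sum_le_sum_of_subset_of_nonneg (Finset.subset_univ S)
            (fun i _ _ => hμ0 i)
      _ = ∑ v, (G.degree v : ℝ) := hsum
      _ ≤ ∑ _v : Fin n, ((n : ℝ) - 1) := Finset.sum_le_sum fun v _ => hdegle v
      _ = (n : ℝ) * ((n : ℝ) - 1) := by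
          rw [Finset.sum_const, Finset.card_univ, Fintype.card_fin, nsmul_eq_mul]
  -- Cauchy–Schwarz
  have hCS : ((n : ℝ) - 1) ^ 2 ≤ (∑ i ∈ S, μ i) * (∑ i ∈ S, (μ i)⁻¹) := by
    have h1 : (∑ _i ∈ S, (1 : ℝ)) = (n : ℝ) - 1 := by
      rw [Finset.sum_const, hScard, nsmul_eq_mul, mul_one, hcast]
    have := Finset.sum_sq_le_sum_mul_sum_of_sq_eq_mul S
      (r := fun _ => (1 : ℝ)) (f := μ) (g := fun i => (μ i)⁻¹)
      (fun i _ => hμ0 i) (fun i _ => inv_nonneg.mpr (hμ0 i))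
      (fun i hi => by
        rw [one_pow, mul_inv_cancel₀ ((Finset.mem_filter.mp hi).2)])
    rwa [h1] at this
  have hkey : ((n : ℝ) - 1) ^ 2 ≤ ((n : ℝ) * ((n : ℝ) - 1)) * I := by
    calc ((n : ℝ) - 1) ^ 2 ≤ (∑ i ∈ S, μ i) * (∑ i ∈ S, (μ i)⁻¹) := hCS
      _ = (∑ i ∈ S, μ i) * I := by rw [← hIS]
      _ ≤ ((n : ℝ) * ((n : ℝ) - 1)) * I := mul_le_mul_of_nonneg_right hTle hI0
  -- the lower bound
  have hbound : ((n : ℝ) - 1) / (2 * n) ≤ rho G := by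
    rw [hrho, div_le_iff₀ (by positivity)]
    rcases eq_or_lt_of_le hn with h1 | h2
    · have : (n : ℝ) = 1 := by exact_mod_cast h1.symm
      rw [this]; nlinarith
    · have h2' : (2 : ℕ) ≤ n := h2
      have hc : (0 : ℝ) < (n : ℝ) - 1 := by
        have : (2 : ℝ) ≤ n := by exact_mod_cast h2'
        linarith
      nlinarith [hkey, hc, hI0]
  refine ⟨hbound, ?_, ?_⟩
  · -- equality implies complete
    intro heq
    rcases eq_or_lt_of_le hn with h1 | h2
    · -- n = 1 : any graph is ⊤
      have hsing : n = 1 := h1.symm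
      subst hsing
      ext v w
      have : v = w := Subsingleton.elim v w
      subst this
      simp
    · have h2' : (2 : ℕ) ≤ n := h2
      have hc : (0 : ℝ) < (n : ℝ) - 1 := by
        have : (2 : ℝ) ≤ n := by exact_mod_cast h2'
        linarith
      have hIeq : I = ((n : ℝ) - 1) / n := by
        rw [hrho] at heq
        field_simp at heq ⊢
        linarith
      -- forces ∑ degrees = n(n-1)
      have hTge : (n : ℝ) * ((n : ℝ) - 1) ≤ ∑ i ∈ S, μ i := by
        have h3 : ((n : ℝ) - 1) ^ 2 ≤ (∑ i ∈ S, μ i) * (((n : ℝ) - 1) / n) := by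
          rw [← hIeq, hIS]; exact hCS
        have hne : (n : ℝ) ≠ 0 := ne_of_gt hn0
        have h4 : (n : ℝ) * ((n : ℝ) - 1) ^ 2 ≤ (∑ i ∈ S, μ i) * ((n : ℝ) - 1) := by
          calc (n : ℝ) * ((n : ℝ) - 1) ^ 2
              ≤ (n : ℝ) * ((∑ i ∈ S, μ i) * (((n : ℝ) - 1) / n)) :=
                mul_le_mul_of_nonneg_left h3 hn0.le
            _ = (∑ i ∈ S, μ i) * ((n : ℝ) - 1) := by field_simp
        exact le_of_mul_le_mul_right (by nlinarith [h4]) hc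
      have hdsum : ∑ v, (G.degree v : ℝ) = (n : ℝ) * ((n : ℝ) - 1) := by
        have hle1 : ∑ i ∈ S, μ i ≤ ∑ v, (G.degree v : ℝ) := by
          rw [← hsum]
          exact Finset.sum_le_sum_of_subset_of_nonneg (Finset.subset_univ S)
            (fun i _ _ => hμ0 i)
        have hle2 : ∑ v, (G.degree v : ℝ) ≤ (n : ℝ) * ((n : ℝ) - 1) := by
          calc ∑ v, (G.degree v : ℝ) ≤ ∑ _v : Fin n, ((n : ℝ) - 1) :=
                Finset.sum_le_sum fun v _ => hdegle v
            _ = (n : ℝ) * ((n : ℝ) - 1) := by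
                rw [Finset.sum_const, Finset.card_univ, Fintype.card_fin, nsmul_eq_mul]
        linarith
      -- all degrees equal n - 1
      have hdeg : ∀ v, G.degree v = n - 1 := by
        by_contra hcon
        push_neg at hcon
        obtain ⟨v, hv⟩ := hcon
        have hvlt : (G.degree v : ℝ) < (n : ℝ) - 1 := by
          rcases lt_or_eq_of_le (hdegle v) with h | h
          · exact h
          · exfalso; apply hv
            have : (G.degree v : ℝ) = ((n - 1 : ℕ) : ℝ) := by rw [hcast, h]
            exact_mod_cast this
        have : ∑ u, (G.degree u : ℝ) < ∑ _u : Fin n, ((n : ℝ) - 1) :=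
          Finset.sum_lt_sum (fun u _ => hdegle u) ⟨v, Finset.mem_univ v, hvlt⟩
        rw [Finset.sum_const, Finset.card_univ, Fintype.card_fin, nsmul_eq_mul] at this
        linarith [hdsum]
      exact eq_top_of_deg' G hdeg
  · -- complete implies equality
    intro hGt
    subst hGt
    have hdich := fun i => eig_of_sq' ((⊤ : SimpleGraph (Fin n)).posSemidef_lapMatrix ℝ).1
      (n : ℝ) (lap_top_sq' hn) i
    have hval : ∀ i ∈ S, (μ i)⁻¹ = ((n : ℝ))⁻¹ := by
      intro i hi
      rcases hdich i with h | h
      · exact absurd h (Finset.mem_filter.mp hi).2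
      · rw [hμdef] at *; rw [h]
    have : I = ((n : ℝ) - 1) * ((n : ℝ))⁻¹ := by
      rw [hIS, Finset.sum_congr rfl hval, Finset.sum_const, hScard, nsmul_eq_mul, hcast]
    rw [hrho, this]
    field_simp
end

section
/- For any tree T on n vertices, the performance measure satisfies ρ_ss(T) = W(T)/(2n), where W(T) is the Wiener index (sum of distances between all unordered pairs of vertices). -/
open Matrix SimpleGraph Finset

/-- Wiener index: sum of distances over all unordered pairs of vertices. -/
noncomputable def wiener {n : ℕ} (G : SimpleGraph (Fin n)) : ℝ :=
  (1/2) * ∑ i, ∑ j, (G.dist i j : ℝ)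

set_option linter.unusedSectionVars false

section Comb

variable {n : ℕ} {T : SimpleGraph (Fin n)} [DecidableRel T.Adj]

/-- Prepend an edge to a shortest path, giving a path when the neighbor is not farther. -/
lemma cons_shortest (hT : T.IsTree) {i j k : Fin n} (h : T.Adj i j)
    (hle : T.dist j k ≤ T.dist i k) :
    ∃ c : T.Walk i k, c.IsPath ∧ c.length = T.dist j k + 1 ∧ c.getVert 1 = j := by
  obtain ⟨q, hq⟩ := hT.isConnected.exists_walk_length_eq_dist j k
  have hqp : q.IsPath := q.isPath_of_length_eq_dist hq
  have hi : i ∉ q.support := by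
    intro hi
    have h1 : T.dist i k ≤ (q.dropUntil i hi).length := SimpleGraph.dist_le _
    have h2 : (q.takeUntil i hi).length + (q.dropUntil i hi).length = q.length := by
      rw [← SimpleGraph.Walk.length_append, SimpleGraph.Walk.take_spec]
    have h3 : (q.takeUntil i hi).length ≠ 0 := by
      intro h0
      exact h.ne' (SimpleGraph.Walk.eq_of_length_eq_zero h0)
    omega
  exact ⟨SimpleGraph.Walk.cons h q, hqp.cons hi, by simp [hq],
    by simp [SimpleGraph.Walk.getVert_cons_succ]⟩

lemma neighbor_dist_cases (hT : T.IsTree) {i j k : Fin n} (h : T.Adj i j) :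
    T.dist j k + 1 = T.dist i k ∨ T.dist j k = T.dist i k + 1 := by
  have hij : T.dist j i = 1 := by rw [SimpleGraph.dist_eq_one_iff_adj]; exact h.symm
  have hji : T.dist i j = 1 := by rw [SimpleGraph.dist_eq_one_iff_adj]; exact h
  have t1 : T.dist j k ≤ T.dist j i + T.dist i k := hT.isConnected.dist_triangle
  have t2 : T.dist i k ≤ T.dist i j + T.dist j k := hT.isConnected.dist_triangle
  have hne : T.dist j k ≠ T.dist i k := by
    intro heq
    obtain ⟨c, hc, hcl, -⟩ := cons_shortest hT h heq.le
    obtain ⟨p, hp⟩ := hT.isConnected.exists_walk_length_eq_dist i k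
    have hpp : p.IsPath := p.isPath_of_length_eq_dist hp
    have := (hT.existsUnique_path i k).unique hc hpp
    rw [this] at hcl
    omega
  omega

lemma closer_exists (hT : T.IsTree) {i k : Fin n} (hik : i ≠ k) :
    ∃ j, T.Adj i j ∧ T.dist j k + 1 = T.dist i k := by
  have hd : 0 < T.dist i k := hT.isConnected.pos_dist_of_ne hik
  obtain ⟨p, hp⟩ := hT.isConnected.exists_walk_length_eq_dist i k
  cases p with
  | nil => simp at hp; omega
  | cons h q =>
    rename_i j
    refine ⟨j, h, ?_⟩
    have h1 : T.dist j k ≤ q.length := SimpleGraph.dist_le _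
    have h2 : T.dist i k ≤ T.dist i j + T.dist j k := hT.isConnected.dist_triangle
    have hji : T.dist i j = 1 := by rw [SimpleGraph.dist_eq_one_iff_adj]; exact h
    simp only [SimpleGraph.Walk.length_cons] at hp
    omega

lemma closer_unique (hT : T.IsTree) {i k j₁ j₂ : Fin n}
    (h1 : T.Adj i j₁) (hd1 : T.dist j₁ k + 1 = T.dist i k)
    (h2 : T.Adj i j₂) (hd2 : T.dist j₂ k + 1 = T.dist i k) : j₁ = j₂ := by
  obtain ⟨c1, hc1, -, hg1⟩ := cons_shortest hT (k := k) h1 (by omega)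
  obtain ⟨c2, hc2, -, hg2⟩ := cons_shortest hT (k := k) h2 (by omega)
  have := (hT.existsUnique_path i k).unique hc1 hc2
  rw [← hg1, ← hg2, this]

lemma sum_neighbors_ne (hT : T.IsTree) {i k : Fin n} (hik : i ≠ k) :
    ∑ j ∈ T.neighborFinset i, (T.dist j k : ℝ) =
      T.degree i * ((T.dist i k : ℝ) + 1) - 2 := by
  obtain ⟨j0, hj0, hd0⟩ := closer_exists hT hik
  have hmem : j0 ∈ T.neighborFinset i := by rwa [mem_neighborFinset]
  have hd0' : (T.dist j0 k : ℝ) + 1 = (T.dist i k : ℝ) := by exact_mod_cast hd0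
  have key : ∀ j ∈ T.neighborFinset i, (T.dist j k : ℝ) =
      (((T.dist i k : ℝ) + 1) + if j = j0 then -2 else 0) := by
    intro j hj
    rw [mem_neighborFinset] at hj
    by_cases hjj : j = j0
    · subst hjj; rw [if_pos rfl]; linarith
    · rcases neighbor_dist_cases hT hj (k := k) with hc | hf
      · exact absurd (closer_unique hT hj hc hj0 hd0) hjj
      · have : (T.dist j k : ℝ) = (T.dist i k : ℝ) + 1 := by exact_mod_cast hf
        simp only [if_neg hjj, add_zero, this]
  rw [Finset.sum_congr rfl key, Finset.sum_add_distrib, Finset.sum_const,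
    Finset.sum_ite_eq' _ j0, if_pos hmem, card_neighborFinset_eq_degree]
  simp only [nsmul_eq_mul]
  ring

lemma sum_neighbors_self (i : Fin n) :
    ∑ j ∈ T.neighborFinset i, (T.dist j i : ℝ) = T.degree i := by
  have key : ∀ j ∈ T.neighborFinset i, (T.dist j i : ℝ) = 1 := by
    intro j hj
    rw [mem_neighborFinset] at hj
    have : T.dist j i = 1 := by rw [SimpleGraph.dist_eq_one_iff_adj]; exact hj.symm
    simp [this]
  rw [Finset.sum_congr rfl key, Finset.sum_const, card_neighborFinset_eq_degree,
    nsmul_eq_mul, mul_one]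

lemma lap_mul_D (hT : T.IsTree) :
    T.lapMatrix ℝ * Matrix.of (fun i j => (T.dist i j : ℝ)) =
      Matrix.of (fun i _ => (2 : ℝ) - T.degree i) - (2 : ℝ) • 1 := by
  ext i k
  have h1 : (T.lapMatrix ℝ * Matrix.of (fun i j => (T.dist i j : ℝ))) i k =
      (T.lapMatrix ℝ *ᵥ fun j => (T.dist j k : ℝ)) i := rfl
  rw [h1, lapMatrix_mulVec_apply]
  by_cases hik : i = k
  · subst hik
    rw [sum_neighbors_self]
    simp [Matrix.one_apply]
  · rw [sum_neighbors_ne hT hik]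
    simp [Matrix.one_apply, hik]
    ring

end Comb

section Mat

variable {n : ℕ} (T : SimpleGraph (Fin n)) [DecidableRel T.Adj]

/-- all-ones matrix -/
def Jmat (n : ℕ) : Matrix (Fin n) (Fin n) ℝ := Matrix.of fun _ _ => 1

/-- projection onto the complement of the all-ones vector -/
noncomputable def Pmat (n : ℕ) : Matrix (Fin n) (Fin n) ℝ := 1 - (n : ℝ)⁻¹ • Jmat n

/-- distance matrix -/
noncomputable def Dmat : Matrix (Fin n) (Fin n) ℝ := Matrix.of fun i j => (T.dist i j : ℝ)

/-- candidate pseudoinverse of the Laplacian -/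
noncomputable def Hmat : Matrix (Fin n) (Fin n) ℝ := (-(1/2) : ℝ) • (Pmat n * Dmat T * Pmat n)

lemma Jmat_mul_Jmat : Jmat n * Jmat n = (n : ℝ) • Jmat n := by
  ext i k
  simp [Jmat, Matrix.mul_apply]

lemma lap_mul_Jmat : T.lapMatrix ℝ * Jmat n = 0 := by
  ext i k
  have h : (T.lapMatrix ℝ *ᵥ fun _ => (1 : ℝ)) i = 0 := by
    rw [T.lapMatrix_mulVec_const_eq_zero]; rfl
  simpa [Jmat, Matrix.mul_apply, Matrix.mulVec, dotProduct] using h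

lemma lap_mul_Pmat : T.lapMatrix ℝ * Pmat n = T.lapMatrix ℝ := by
  rw [Pmat, Matrix.mul_sub, Matrix.mul_smul, lap_mul_Jmat, mul_one, smul_zero, sub_zero]

lemma Pmat_mul_Pmat (hn : 0 < n) : Pmat n * Pmat n = Pmat n := by
  have hne : (n : ℝ) ≠ 0 := Nat.cast_ne_zero.mpr hn.ne'
  rw [Pmat]
  simp only [Matrix.sub_mul, Matrix.mul_sub, Matrix.smul_mul, Matrix.mul_smul, one_mul, mul_one,
    Jmat_mul_Jmat, smul_smul]
  rw [inv_mul_cancel₀ hne, one_smul, sub_self, smul_zero, sub_zero]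

lemma Emat_mul_Pmat (hn : 0 < n) (f : Fin n → ℝ) :
    (Matrix.of fun i _ => f i : Matrix (Fin n) (Fin n) ℝ) * Pmat n = 0 := by
  have hne : (n : ℝ) ≠ 0 := Nat.cast_ne_zero.mpr hn.ne'
  ext i k
  simp only [Pmat, Jmat, Matrix.mul_apply, Matrix.sub_apply, Matrix.one_apply,
    Matrix.smul_apply, Matrix.of_apply, smul_eq_mul, mul_one, mul_sub, Finset.sum_sub_distrib,
    Finset.mul_sum, Finset.sum_const, card_univ, Fintype.card_fin, mul_ite, mul_zero,
    Finset.sum_ite_eq', Finset.mem_univ, if_pos, Matrix.zero_apply, nsmul_eq_mul]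
  field_simp
  simp

lemma lap_mul_Hmat (hn : 0 < n)
    (hLD : T.lapMatrix ℝ * Dmat T =
      Matrix.of (fun i _ => (2 : ℝ) - T.degree i) - (2 : ℝ) • 1) :
    T.lapMatrix ℝ * Hmat T = Pmat n := by
  rw [Hmat, Matrix.mul_smul, ← Matrix.mul_assoc, ← Matrix.mul_assoc, lap_mul_Pmat, hLD,
    Matrix.sub_mul, Emat_mul_Pmat (n := n) hn (fun i => (2 : ℝ) - T.degree i), Matrix.smul_mul, one_mul, zero_sub, smul_neg, smul_smul]
  norm_num

lemma Pmat_apply (i x : Fin n) :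
    Pmat n i x = (if i = x then (1:ℝ) else 0) - (n : ℝ)⁻¹ := by
  simp [Pmat, Jmat, Matrix.one_apply]

lemma Pmat_mulVec_const (hn : 0 < n) (c : ℝ) : Pmat n *ᵥ (fun _ => c) = 0 := by
  have hne : (n : ℝ) ≠ 0 := Nat.cast_ne_zero.mpr hn.ne'
  ext i
  simp only [Matrix.mulVec, dotProduct, Pmat_apply, Pi.zero_apply]
  have h : ∀ x : Fin n, ((if i = x then (1:ℝ) else 0) - (n : ℝ)⁻¹) * c =
      (if i = x then c else 0) - (n : ℝ)⁻¹ * c := by intro x; split <;> ring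
  rw [Finset.sum_congr rfl (fun x _ => h x), Finset.sum_sub_distrib]
  simp [Finset.sum_ite_eq, hne]

lemma Hmat_mulVec_const (hn : 0 < n) (c : ℝ) : Hmat T *ᵥ (fun _ => c) = 0 := by
  rw [Hmat, Matrix.smul_mulVec, Matrix.mul_assoc, ← Matrix.mulVec_mulVec,
    ← Matrix.mulVec_mulVec, Pmat_mulVec_const hn, Matrix.mulVec_zero, Matrix.mulVec_zero,
    smul_zero]

lemma trace_Hmat (hn : 0 < n) :
    Matrix.trace (Hmat T) = (∑ i, ∑ j, (T.dist i j : ℝ)) / (2 * n) := by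
  have hne : (n : ℝ) ≠ 0 := Nat.cast_ne_zero.mpr hn.ne'
  have h1 : Matrix.trace (Pmat n * Dmat T * Pmat n) = Matrix.trace (Pmat n * Dmat T) := by
    rw [Matrix.trace_mul_cycle, Pmat_mul_Pmat hn]
  have h2 : Matrix.trace (Dmat T) = 0 := by
    simp [Matrix.trace, Matrix.diag, Dmat, SimpleGraph.dist_self]
  have h3 : Matrix.trace (Jmat n * Dmat T) = ∑ i, ∑ j, (T.dist i j : ℝ) := by
    rw [Matrix.trace]
    simp only [Matrix.diag_apply, Matrix.mul_apply, Jmat, Dmat, Matrix.of_apply, one_mul]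
    rw [Finset.sum_comm]
  rw [Hmat, Matrix.trace_smul, h1, Pmat, Matrix.sub_mul, Matrix.trace_sub, one_mul,
    Matrix.smul_mul, Matrix.trace_smul, h2, h3]
  simp only [smul_eq_mul, zero_sub, mul_neg, neg_neg]
  field_simp

end Mat

section Spectral

variable {n : ℕ} (T : SimpleGraph (Fin n)) [DecidableRel T.Adj]

lemma entry_conj (A U : Matrix (Fin n) (Fin n) ℝ) (i : Fin n) :
    (Uᵀ * A * U) i i = (fun r => U r i) ⬝ᵥ (A *ᵥ fun r => U r i) := by
  simp only [Matrix.mul_apply, Matrix.transpose_apply, dotProduct, Matrix.mulVec,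
    Finset.sum_mul, Finset.mul_sum]
  rw [Finset.sum_comm]
  exact Finset.sum_congr rfl fun r _ => Finset.sum_congr rfl fun s _ => by ring

lemma lap_move (v w : Fin n → ℝ) :
    (T.lapMatrix ℝ *ᵥ v) ⬝ᵥ w = v ⬝ᵥ (T.lapMatrix ℝ *ᵥ w) := by
  have hsym : (T.lapMatrix ℝ)ᵀ = T.lapMatrix ℝ := T.isSymm_lapMatrix (R := ℝ)
  conv_lhs => rw [← hsym]
  rw [Matrix.mulVec_transpose, Matrix.dotProduct_mulVec]

lemma sum_inv_eig (hT : T.IsTree) :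
    ∑ i, ((T.posSemidef_lapMatrix ℝ).1.eigenvalues i)⁻¹ = Matrix.trace (Hmat T) := by
  have hn : 0 < n := by
    have : Nonempty (Fin n) := hT.isConnected.nonempty
    exact Fin.pos_iff_nonempty.mpr this
  set hL := (T.posSemidef_lapMatrix ℝ).1 with hLdef
  let u : Fin n → (Fin n → ℝ) := fun i => ⇑(hL.eigenvectorBasis i)
  let U : Matrix (Fin n) (Fin n) ℝ := Matrix.of fun r c => u c r
  have horth : ∀ a b, u a ⬝ᵥ u b = if a = b then (1:ℝ) else 0 := by
    intro a b
    have h := orthonormal_iff_ite.mp hL.eigenvectorBasis.orthonormal a b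
    simpa [dotProduct, PiLp.inner_apply, RCLike.inner_apply, starRingEnd_apply,
      star_trivial, u, mul_comm] using h
  have hUtU : Uᵀ * U = 1 := by
    ext a b
    simp only [Matrix.mul_apply, Matrix.transpose_apply, Matrix.one_apply, U, Matrix.of_apply]
    exact horth a b
  have hUUt : U * Uᵀ = 1 := mul_eq_one_comm.mp hUtU
  have htr : Matrix.trace (Uᵀ * Hmat T * U) = Matrix.trace (Hmat T) := by
    rw [Matrix.trace_mul_cycle, hUUt, one_mul]
  rw [← htr, Matrix.trace]
  apply Finset.sum_congr rfl
  intro i _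
  rw [Matrix.diag_apply, entry_conj]
  have hueq : (fun r => U r i) = u i := rfl
  rw [hueq]
  have hLu : T.lapMatrix ℝ *ᵥ u i = hL.eigenvalues i • u i := hL.mulVec_eigenvectorBasis i
  by_cases hmu : hL.eigenvalues i = 0
  · rw [hmu, _root_.inv_zero]
    have h0 : T.lapMatrix ℝ *ᵥ u i = 0 := by rw [hLu, hmu, zero_smul]
    have hker : Matrix.toLin' (T.lapMatrix ℝ) (u i) = 0 := by
      rw [Matrix.toLin'_apply, h0]
    have hconst : ∀ a b : Fin n, u i a = u i b :=
      fun a b => T.lapMatrix_mulVec_eq_zero_iff_forall_reachable.mp h0 a b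
        (hT.isConnected.preconnected a b)
    have hcf : u i = fun _ => u i ⟨0, hn⟩ := funext fun b => hconst b ⟨0, hn⟩
    rw [hcf, Hmat_mulVec_const T hn, dotProduct_zero]
  · have h1 : u i ⬝ᵥ (fun _ => (1:ℝ)) = 0 := by
      have hm := lap_move T (u i) (fun _ => (1:ℝ))
      rw [hLu, smul_dotProduct, T.lapMatrix_mulVec_const_eq_zero,
        dotProduct_zero, smul_eq_mul] at hm
      exact (mul_eq_zero.mp hm).resolve_left hmu
    have hJu : Jmat n *ᵥ u i = 0 := by
      ext k
      have : (Jmat n *ᵥ u i) k = u i ⬝ᵥ (fun _ => (1:ℝ)) := by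
        simp [Jmat, Matrix.mulVec, dotProduct, mul_comm]
      rw [this, h1]; rfl
    have hPu : Pmat n *ᵥ u i = u i := by
      rw [Pmat, Matrix.sub_mulVec, Matrix.one_mulVec, Matrix.smul_mulVec, hJu,
        smul_zero, sub_zero]
    have hnormu : u i ⬝ᵥ u i = 1 := by simpa using horth i i
    have key : hL.eigenvalues i * (u i ⬝ᵥ (Hmat T *ᵥ u i)) = 1 := by
      have hm := lap_move T (u i) (Hmat T *ᵥ u i)
      rw [hLu, smul_dotProduct, smul_eq_mul] at hm
      rw [hm, Matrix.mulVec_mulVec, lap_mul_Hmat T hn (lap_mul_D hT), hPu, hnormu]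
    exact (eq_inv_of_mul_eq_one_right key).symm

end Spectral

/-- For any tree `T` on `n` vertices, `ρ_ss(T) = W(T)/(2n)`. -/
theorem stmt4 {n : ℕ} (T : SimpleGraph (Fin n)) [DecidableRel T.Adj] (hT : T.IsTree) :
    rho T = wiener T / (2 * n) := by
  have hn : 0 < n := by
    have : Nonempty (Fin n) := hT.isConnected.nonempty
    exact Fin.pos_iff_nonempty.mpr this
  have hne : (n : ℝ) ≠ 0 := Nat.cast_ne_zero.mpr hn.ne'
  rw [rho, sum_inv_eig T hT, trace_Hmat T hn, wiener]
  field_simp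
end

section
/- For any connected weighted graph G on n vertices whose Laplacian eigenvalues are 0 = λ_1 < λ_2 ≤ ... ≤ λ_n, and any α > 0, it holds that ∑_{i=1}^n 1/(d_i + α) ≤ 1/(nα) + ∑_{i=2}^n 1/λ_i, where d_i are the (weighted) vertex degrees. -/
open Matrix SimpleGraph Finset

/-- Weighted Laplacian of a graph with edge weights `w`. -/
noncomputable def glap {n : ℕ} (G : SimpleGraph (Fin n)) [DecidableRel G.Adj]
    (w : Sym2 (Fin n) → ℝ) : Matrix (Fin n) (Fin n) ℝ :=
  Matrix.of fun i j =>
    if i = j then ∑ k, (if G.Adj i k then w s(i, k) else 0)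
    else if G.Adj i j then -w s(i, j) else 0

lemma glap_isHermitian {n : ℕ} (G : SimpleGraph (Fin n)) [DecidableRel G.Adj]
    (w : Sym2 (Fin n) → ℝ) : (glap G w).IsHermitian := by
  rw [Matrix.IsHermitian, conjTranspose_eq_transpose_of_trivial]
  ext i j
  simp only [glap, Matrix.transpose_apply, Matrix.of_apply]
  by_cases h : i = j
  · subst h; simp
  · have h' : ¬ j = i := fun hh => h hh.symm
    rw [if_neg h', if_neg h]
    by_cases ha : G.Adj i j
    · rw [if_pos ha, if_pos (G.adj_comm i j |>.mp ha), Sym2.eq_swap]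
    · rw [if_neg ha, if_neg (fun hh => ha ((G.adj_comm i j).mpr hh))]

/-- Eigenvalues of the weighted Laplacian. -/
noncomputable def wEig {n : ℕ} (G : SimpleGraph (Fin n)) [DecidableRel G.Adj]
    (w : Sym2 (Fin n) → ℝ) : Fin n → ℝ :=
  (glap_isHermitian G w).eigenvalues

/-- Performance measure of a weighted graph. -/
noncomputable def wRho {n : ℕ} (G : SimpleGraph (Fin n)) [DecidableRel G.Adj]
    (w : Sym2 (Fin n) → ℝ) : ℝ :=
  (1/2) * ∑ i, (wEig G w i)⁻¹

section helpers

variable {n : ℕ} (G : SimpleGraph (Fin n)) [DecidableRel G.Adj] (w : Sym2 (Fin n) → ℝ)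

/-- Pointwise edge weight. -/
noncomputable def gaW (i j : Fin n) : ℝ := if G.Adj i j then w s(i, j) else 0

lemma gaW_symm (i j : Fin n) : gaW G w i j = gaW G w j i := by
  unfold gaW
  by_cases h : G.Adj i j
  · rw [if_pos h, if_pos h.symm, Sym2.eq_swap]
  · rw [if_neg h, if_neg (fun hh => h hh.symm)]

lemma gaW_nonneg (hw : ∀ e ∈ G.edgeSet, 0 < w e) (i j : Fin n) : 0 ≤ gaW G w i j := by
  unfold gaW
  by_cases h : G.Adj i j
  · rw [if_pos h]; exact (hw _ (G.mem_edgeSet.mpr h)).le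
  · rw [if_neg h]

lemma glap_eq' (i j : Fin n) :
    glap G w i j = (if i = j then ∑ k, gaW G w i k else 0) - gaW G w i j := by
  unfold glap gaW
  by_cases h : i = j
  · subst h; simp [G.irrefl]
  · simp only [Matrix.of_apply, if_neg h, zero_sub]
    by_cases ha : G.Adj i j <;> simp [ha]

lemma glap_mulVec' (x : Fin n → ℝ) (i : Fin n) :
    (glap G w *ᵥ x) i = (∑ k, gaW G w i k) * x i - ∑ j, gaW G w i j * x j := by
  simp only [mulVec, dotProduct, glap_eq', sub_mul, Finset.sum_sub_distrib, ite_mul, zero_mul]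
  congr 1
  rw [Finset.sum_ite_eq (Finset.univ : Finset (Fin n)) i (fun j => (∑ k, gaW G w i k) * x j),
    if_pos (Finset.mem_univ i)]

lemma glap_quadform (x : Fin n → ℝ) :
    x ⬝ᵥ (glap G w *ᵥ x) = (1/2) * ∑ i, ∑ j, gaW G w i j * (x i - x j)^2 := by
  have h1 : ∀ i j : Fin n, gaW G w i j * (x i - x j)^2
      = gaW G w i j * (x i)^2 + gaW G w i j * (x j)^2 - 2 * (gaW G w i j * (x i * x j)) := by
    intro i j; ring
  simp only [h1, Finset.sum_sub_distrib, Finset.sum_add_distrib]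
  have h2 : ∑ i, ∑ j, gaW G w i j * (x j)^2 = ∑ i, ∑ j, gaW G w i j * (x i)^2 := by
    rw [Finset.sum_comm]
    exact Finset.sum_congr rfl fun i _ => Finset.sum_congr rfl fun j _ => by rw [gaW_symm]
  rw [h2]
  have lhs : x ⬝ᵥ (glap G w *ᵥ x)
      = (∑ i, (∑ k, gaW G w i k) * x i ^ 2) - ∑ i, ∑ j, gaW G w i j * (x i * x j) := by
    simp only [dotProduct, glap_mulVec', mul_sub, Finset.sum_sub_distrib, Finset.mul_sum]
    congr 1
    · exact Finset.sum_congr rfl fun i _ => by ring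
    · exact Finset.sum_congr rfl fun i _ => Finset.sum_congr rfl fun j _ => by ring
  have h3 : ∑ i, ∑ j, 2 * (gaW G w i j * (x i * x j))
      = 2 * ∑ i, ∑ j, gaW G w i j * (x i * x j) := by
    simp [Finset.mul_sum]
  rw [lhs, h3]
  simp only [Finset.sum_mul, mul_assoc]
  ring

lemma glap_posSemidef (hw : ∀ e ∈ G.edgeSet, 0 < w e) : (glap G w).PosSemidef := by
  refine posSemidef_iff_dotProduct_mulVec.mpr ⟨glap_isHermitian G w, fun x => ?_⟩
  have hsx : star x = x := rfl
  rw [hsx, glap_quadform]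
  have : (0:ℝ) ≤ ∑ i, ∑ j, gaW G w i j * (x i - x j)^2 :=
    Finset.sum_nonneg fun i _ => Finset.sum_nonneg fun j _ =>
      mul_nonneg (gaW_nonneg G w hw i j) (sq_nonneg _)
  linarith

lemma glap_ker_const (hw : ∀ e ∈ G.edgeSet, 0 < w e) (hG : G.Connected)
    (x : Fin n → ℝ) (hx : glap G w *ᵥ x = 0) (i j : Fin n) : x i = x j := by
  have hq : (1/2) * ∑ i, ∑ j, gaW G w i j * (x i - x j)^2 = 0 := by
    rw [← glap_quadform, hx, dotProduct_zero]
  have hsum : ∑ i, ∑ j, gaW G w i j * (x i - x j)^2 = 0 := by linarith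
  have hnn : ∀ i ∈ Finset.univ, (0:ℝ) ≤ ∑ j, gaW G w i j * (x i - x j)^2 := fun i _ =>
    Finset.sum_nonneg fun j _ => mul_nonneg (gaW_nonneg G w hw i j) (sq_nonneg _)
  have hadj : ∀ a b : Fin n, G.Adj a b → x a = x b := by
    intro a b hab
    have h1 := (Finset.sum_eq_zero_iff_of_nonneg hnn).mp hsum a (Finset.mem_univ a)
    have hnn2 : ∀ j ∈ Finset.univ, (0:ℝ) ≤ gaW G w a j * (x a - x j)^2 := fun j _ =>
      mul_nonneg (gaW_nonneg G w hw a j) (sq_nonneg _)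
    have h2 := (Finset.sum_eq_zero_iff_of_nonneg hnn2).mp h1 b (Finset.mem_univ b)
    have hpos : 0 < gaW G w a b := by
      unfold gaW; rw [if_pos hab]; exact hw _ (G.mem_edgeSet.mpr hab)
    rcases mul_eq_zero.mp h2 with h | h
    · exact absurd h hpos.ne'
    · have := sq_eq_zero_iff.mp h; linarith
  obtain ⟨p⟩ := hG.preconnected i j
  induction p with
  | nil => rfl
  | cons h p ih => exact (hadj _ _ h).trans ih

lemma glap_ones : glap G w *ᵥ (fun _ => (1:ℝ)) = 0 := by
  funext i
  rw [glap_mulVec']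
  simp

end helpers

section spectral

variable {n : ℕ} {M : Matrix (Fin n) (Fin n) ℝ} (hM : M.IsHermitian)

lemma diag_spectral (i : Fin n) :
    M i i = ∑ k, hM.eigenvalues k * (hM.eigenvectorBasis k i)^2 := by
  conv_lhs => rw [hM.spectral_theorem]
  simp only [Matrix.mul_apply, Matrix.diagonal_apply, Function.comp, mul_ite, mul_zero,
    Finset.sum_ite_eq', Finset.mem_univ, if_true, Matrix.star_apply,
    Matrix.IsHermitian.eigenvectorUnitary_apply, Unitary.conjStarAlgAut_apply]
  exact Finset.sum_congr rfl fun k _ => by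
    simp only [RCLike.star_def, RCLike.conj_to_real]
    norm_num; ring

lemma row_sq_sum (i : Fin n) : ∑ k, (hM.eigenvectorBasis k i)^2 = 1 := by
  have h := Matrix.mem_unitaryGroup_iff.mp (Matrix.IsHermitian.eigenvectorUnitary hM).2
  have h2 := congrFun (congrFun h i) i
  simp only [Matrix.mul_apply, Matrix.star_apply, Matrix.one_apply_eq,
    Matrix.IsHermitian.eigenvectorUnitary_apply] at h2
  rw [← h2]
  exact Finset.sum_congr rfl fun k _ => by simp [sq]

lemma col_sq_sum (k : Fin n) : ∑ i, (hM.eigenvectorBasis k i)^2 = 1 := by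
  have h := Matrix.mem_unitaryGroup_iff'.mp (Matrix.IsHermitian.eigenvectorUnitary hM).2
  have h2 := congrFun (congrFun h k) k
  simp only [Matrix.mul_apply, Matrix.star_apply, Matrix.one_apply_eq,
    Matrix.IsHermitian.eigenvectorUnitary_apply] at h2
  rw [← h2]
  exact Finset.sum_congr rfl fun i _ => by simp [sq]

lemma col_orth (k l : Fin n) (hkl : k ≠ l) :
    ∑ i, hM.eigenvectorBasis k i * hM.eigenvectorBasis l i = 0 := by
  have h := Matrix.mem_unitaryGroup_iff'.mp (Matrix.IsHermitian.eigenvectorUnitary hM).2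
  have h2 := congrFun (congrFun h k) l
  simp only [Matrix.mul_apply, Matrix.star_apply, Matrix.one_apply,
    Matrix.IsHermitian.eigenvectorUnitary_apply, if_neg hkl] at h2
  rw [← h2]
  exact Finset.sum_congr rfl fun i _ => by simp

lemma exists_zero_eig (hn : 0 < n) (ho : M *ᵥ (fun _ => (1:ℝ)) = 0) :
    ∃ k, hM.eigenvalues k = 0 := by
  set U : Matrix (Fin n) (Fin n) ℝ := (hM.eigenvectorUnitary : Matrix (Fin n) (Fin n) ℝ) with hU
  have hUU : U * star U = 1 := Matrix.mem_unitaryGroup_iff.mp hM.eigenvectorUnitary.2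
  have hUU' : star U * U = 1 := Matrix.mem_unitaryGroup_iff'.mp hM.eigenvectorUnitary.2
  set o : Fin n → ℝ := fun _ => (1:ℝ) with hodef
  set y : Fin n → ℝ := star U *ᵥ o with hy
  have hDy : Matrix.diagonal hM.eigenvalues *ᵥ y = 0 := by
    have hcom : star U * M = Matrix.diagonal hM.eigenvalues * star U := by
      conv_lhs => rw [hM.spectral_theorem, Unitary.conjStarAlgAut_apply]
      rw [← Matrix.mul_assoc, ← Matrix.mul_assoc, hUU', Matrix.one_mul]
      norm_num
      rfl
    calc Matrix.diagonal hM.eigenvalues *ᵥ y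
        = (Matrix.diagonal hM.eigenvalues * star U) *ᵥ o := by rw [hy, Matrix.mulVec_mulVec]
      _ = (star U * M) *ᵥ o := by rw [hcom]
      _ = star U *ᵥ (M *ᵥ o) := by rw [Matrix.mulVec_mulVec]
      _ = 0 := by rw [ho, Matrix.mulVec_zero]
  have hyne : y ≠ 0 := by
    intro h
    have h1 : o = 0 := by
      have h2 : U *ᵥ y = o := by
        rw [hy, Matrix.mulVec_mulVec, hUU, Matrix.one_mulVec]
      rw [h, Matrix.mulVec_zero] at h2
      exact h2.symm
    have := congrFun h1 ⟨0, hn⟩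
    simp [hodef] at this
  obtain ⟨k, hk⟩ := Function.ne_iff.mp hyne
  refine ⟨k, ?_⟩
  have hk2 := congrFun hDy k
  rw [Matrix.mulVec_diagonal] at hk2
  rcases mul_eq_zero.mp hk2 with h | h
  · exact h
  · exact absurd h hk

end spectral

/-- Schur–Horn bound: `∑ 1/(d_i + α) ≤ 1/(nα) + ∑_{i≥2} 1/λ_i` for any `α > 0`,
where `d_i = (L_G)_{ii}` are the weighted degrees. -/
theorem stmt8 {n : ℕ} (G : SimpleGraph (Fin n)) [DecidableRel G.Adj]
    (w : Sym2 (Fin n) → ℝ) (hw : ∀ e ∈ G.edgeSet, 0 < w e) (hG : G.Connected)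
    (α : ℝ) (hα : 0 < α) :
    ∑ i, (glap G w i i + α)⁻¹ ≤ ((n : ℝ) * α)⁻¹ + ∑ i, (wEig G w i)⁻¹ := by
  have hL : (glap G w).IsHermitian := glap_isHermitian G w
  have hn : 0 < n := hG.nonempty.some.pos
  have hnR : (0:ℝ) < (n:ℝ) := by exact_mod_cast hn
  set L := glap G w with hLdef
  set lam : Fin n → ℝ := hL.eigenvalues with hlam
  set v : Fin n → Fin n → ℝ := fun k i => hL.eigenvectorBasis k i with hv
  -- eigenvalue equations
  have hmv : ∀ k, L *ᵥ (v k) = lam k • (v k) := fun k => hL.mulVec_eigenvectorBasis k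
  -- nonnegativity
  have hpsd : L.PosSemidef := glap_posSemidef G w hw
  have hlam_nonneg : ∀ k, 0 ≤ lam k := fun k => hpsd.eigenvalues_nonneg k
  -- zero eigenvalue
  obtain ⟨k0, hk0⟩ := exists_zero_eig hL hn (glap_ones G w)
  have hk0' : lam k0 = 0 := hk0
  -- eigenvector of eigenvalue zero is constant
  have hconst : ∀ k, lam k = 0 → ∀ i j, v k i = v k j := by
    intro k hk i j
    refine glap_ker_const G w hw hG (v k) ?_ i j
    rw [hmv k, hk, zero_smul]
  -- entries of v k0 squared are 1/n
  have hc : ∀ i, (v k0 i)^2 = (n:ℝ)⁻¹ := by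
    intro i
    have hsum : ∑ j, (v k0 j)^2 = 1 := col_sq_sum hL k0
    have : ∑ j, (v k0 j)^2 = (n:ℝ) * (v k0 i)^2 := by
      rw [Finset.sum_congr rfl (fun j _ => by rw [hconst k0 hk0 j i])]
      simp [mul_comm]
    rw [this] at hsum
    field_simp at hsum ⊢
    linarith
  -- all other eigenvalues positive
  have hpos : ∀ k, k ≠ k0 → 0 < lam k := by
    intro k hkne
    rcases (hlam_nonneg k).lt_or_eq with h | h
    · exact h
    exfalso
    have hck : ∀ i j, v k i = v k j := hconst k h.symm
    have horth : ∑ i, v k i * v k0 i = 0 := col_orth hL k k0 hkne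
    have i0 : Fin n := ⟨0, hn⟩
    have hsum : ∑ i, v k i * v k0 i = (n:ℝ) * (v k i0 * v k0 i0) := by
      rw [Finset.sum_congr rfl (fun j _ => by rw [hck j i0, hconst k0 hk0 j i0])]
      simp [mul_comm]
    rw [hsum] at horth
    have hprod : v k i0 * v k0 i0 = 0 := by
      rcases mul_eq_zero.mp horth with h' | h'
      · exact absurd h' hnR.ne'
      · exact h'
    have hv0 : v k0 i0 ≠ 0 := by
      intro hz
      have := hc i0
      rw [hz] at this
      simp at this
      exact absurd this.symm hnR.ne'
    have hvk0 : v k i0 = 0 := by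
      rcases mul_eq_zero.mp hprod with h' | h'
      · exact h'
      · exact absurd h' hv0
    have hcol : ∑ i, (v k i)^2 = 1 := col_sq_sum hL k
    have : ∑ i, (v k i)^2 = 0 := by
      refine Finset.sum_eq_zero fun i _ => ?_
      rw [hck i i0, hvk0]; ring
    rw [this] at hcol
    exact one_ne_zero hcol.symm
  -- the modified eigenvalues
  set mu : Fin n → ℝ := fun k => if k = k0 then (n:ℝ) * α else lam k with hmu
  have hmupos : ∀ k, 0 < mu k := by
    intro k
    by_cases h : k = k0
    · simp only [hmu, if_pos h]; positivity
    · simp only [hmu, if_neg h]; exact hpos k h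
  -- diagonal decomposition
  have hdiag : ∀ i, L i i = ∑ k, lam k * (v k i)^2 := fun i => diag_spectral hL i
  have hrow : ∀ i, ∑ k, (v k i)^2 = 1 := fun i => row_sq_sum hL i
  have hLα : ∀ i, L i i + α = ∑ k, (v k i)^2 * mu k := by
    intro i
    have hterm : ∀ k, (v k i)^2 * mu k
        = lam k * (v k i)^2 + (if k = k0 then α else 0) := by
      intro k
      by_cases h : k = k0
      · subst h
        simp only [hmu, if_pos rfl, hk0', zero_mul, zero_add, hc i]
        field_simp
        simp
      · simp only [hmu, if_neg h]; ring
    rw [Finset.sum_congr rfl (fun k _ => hterm k), Finset.sum_add_distrib, ← hdiag i]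
    simp
  -- Jensen per row
  have hjensen : ∀ i, (L i i + α)⁻¹ ≤ ∑ k, (v k i)^2 * (mu k)⁻¹ := by
    intro i
    have hconv : ConvexOn ℝ (Set.Ioi (0:ℝ)) fun x : ℝ => x ^ (-1 : ℤ) := convexOn_zpow (-1)
    have h := hconv.map_sum_le (t := Finset.univ) (w := fun k => (v k i)^2)
      (p := mu) (fun k _ => sq_nonneg _) (hrow i) (fun k _ => hmupos k)
    simp only [smul_eq_mul, _root_.zpow_neg_one] at h
    rw [hLα i]
    exact h
  -- sum up
  calc ∑ i, (L i i + α)⁻¹ ≤ ∑ i, ∑ k, (v k i)^2 * (mu k)⁻¹ :=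
        Finset.sum_le_sum fun i _ => hjensen i
    _ = ∑ k, (∑ i, (v k i)^2) * (mu k)⁻¹ := by
        rw [Finset.sum_comm]
        exact Finset.sum_congr rfl fun k _ => by rw [Finset.sum_mul]
    _ = ∑ k, (mu k)⁻¹ := by
        exact Finset.sum_congr rfl fun k _ => by rw [col_sq_sum hL k, one_mul]
    _ = ((n:ℝ) * α)⁻¹ + ∑ k, (lam k)⁻¹ := by
        have hterm : ∀ k, (mu k)⁻¹
            = (lam k)⁻¹ + (if k = k0 then ((n:ℝ) * α)⁻¹ else 0) := by
          intro k
          by_cases h : k = k0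
          · subst h; simp [hmu, hk0']
          · simp [hmu, if_neg h]
        rw [Finset.sum_congr rfl (fun k _ => hterm k), Finset.sum_add_distrib]
        simp [add_comm]
    _ = ((n : ℝ) * α)⁻¹ + ∑ i, (wEig G w i)⁻¹ := rfl
end
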